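/- In the general setup (arbitrary u with u(0)=0, u(1)=1), for every natural number h there exists a polynomial p with rational coefficients of degree at most 2h such that p(j) = ã_h(j) for every natural number j. -/

import Mathlib

/-- Formal exponential of a power series with zero constant coefficient over a
`ℚ`-algebra: `exp F = Σ_{k≥0} F^k / k!`.  Since `F` has zero constant coefficient,
only `k ≤ j` contributes to the coefficient of `x^j`, so this sum is exact. -/
noncomputable def expPS {A : Type*} [CommRing A] [Algebra ℚ A]
    (F : PowerSeries A) : PowerSeries A :=
  PowerSeries.mk fun j =>
    ∑ k ∈ Finset.range (j + 1), (k.factorial : ℚ)⁻¹ • PowerSeries.coeff (R := A) j (F ^ k)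

/-- `Mj u j` is the coefficient of `x^j` in `exp (n · U(x))`, a polynomial in `n`,
where `U(x) = Σ_{s≥1} u s · x^s` (here `n` is the polynomial variable `X`). -/
noncomputable def Mj (u : ℕ → ℚ) (j : ℕ) : Polynomial ℚ :=
  PowerSeries.coeff (R := Polynomial ℚ) j
    (expPS (PowerSeries.mk fun s => Polynomial.C (u s) * Polynomial.X))

/-- `atilde u h j = j! · (coefficient of n^{j−h} in M_j)` for `h ≤ j`, and `0` for `h > j`. -/
noncomputable def atilde (u : ℕ → ℚ) (h j : ℕ) : ℚ :=
  if h ≤ j then (j.factorial : ℚ) * (Mj u j).coeff (j - h) else 0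

/-- The coefficient of `t^h` in `log (1 + V)` for a power series `V` with zero constant
coefficient: `[t^h] Σ_{m≥1} (−1)^{m+1} V^m / m` (only `m ≤ h` contributes). -/
noncomputable def logCoeffOneAdd (V : PowerSeries ℚ) (h : ℕ) : ℚ :=
  ∑ m ∈ Finset.Icc 1 h, ((-1 : ℚ) ^ (m + 1) / m) * PowerSeries.coeff (R := ℚ) h (V ^ m)

/-- `Lh u h j` is the coefficient of `t^h` in `log (1 + Σ_{s≥1} ã_s(j) t^s)`. -/
noncomputable def Lh (u : ℕ → ℚ) (h j : ℕ) : ℚ :=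
  logCoeffOneAdd (PowerSeries.mk fun s => if s = 0 then 0 else atilde u s j) h

open PowerSeries Polynomial Finset in
theorem Mj_coeff (u : ℕ → ℚ) (j d : ℕ) :
    (Mj u j).coeff d = if d ≤ j then (d.factorial : ℚ)⁻¹ * PowerSeries.coeff (R := ℚ) j ((PowerSeries.mk u) ^ d) else 0 := by
  have hF : (PowerSeries.mk fun s => Polynomial.C (u s) * Polynomial.X)
      = PowerSeries.map Polynomial.C (PowerSeries.mk u) * PowerSeries.C (R := Polynomial ℚ) Polynomial.X := by
    ext s
    simp [PowerSeries.coeff_mul_C]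
  have hcoeff : ∀ k, PowerSeries.coeff (R := Polynomial ℚ) j
      ((PowerSeries.mk fun s => Polynomial.C (u s) * Polynomial.X) ^ k)
      = Polynomial.C (PowerSeries.coeff (R := ℚ) j ((PowerSeries.mk u) ^ k)) * Polynomial.X ^ k := by
    intro k
    rw [hF, mul_pow, ← map_pow, ← map_pow, PowerSeries.coeff_mul_C, PowerSeries.coeff_map]
  unfold Mj expPS
  rw [PowerSeries.coeff_mk, Polynomial.finset_sum_coeff]
  simp only [hcoeff, Polynomial.coeff_smul, Polynomial.coeff_C_mul, Polynomial.coeff_X_pow,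
    smul_eq_mul, mul_ite, mul_one, mul_zero]
  rw [Finset.sum_ite_eq (Finset.range (j+1)) d (fun k => (k.factorial : ℚ)⁻¹ * PowerSeries.coeff (R := ℚ) j ((PowerSeries.mk u) ^ k))]
  simp [Nat.lt_succ_iff]
noncomputable def Wps (u : ℕ → ℚ) : PowerSeries ℚ :=
  PowerSeries.mk fun s => if s = 0 then 0 else u (s + 1)

theorem mk_u_eq (u : ℕ → ℚ) (hu0 : u 0 = 0) (hu1 : u 1 = 1) :
    PowerSeries.mk u = PowerSeries.X * (1 + Wps u) := by
  ext t
  cases t with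
  | zero => simp [hu0]
  | succ n =>
    rw [PowerSeries.coeff_succ_X_mul]
    cases n with
    | zero => simp [Wps, hu1]
    | succ m => simp [Wps, PowerSeries.coeff_mk]

theorem coeff_W_pow_zero (u : ℕ → ℚ) {h m : ℕ} (hm : h < m) :
    PowerSeries.coeff (R := ℚ) h ((Wps u) ^ m) = 0 := by
  have hX : (PowerSeries.X : PowerSeries ℚ) ∣ Wps u := by
    rw [PowerSeries.X_dvd_iff]; simp [Wps]
  have : (PowerSeries.X : PowerSeries ℚ) ^ m ∣ (Wps u) ^ m := pow_dvd_pow_of_dvd hX m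
  exact PowerSeries.X_pow_dvd_iff.mp this h hm

theorem coeff_one_add_W_pow (u : ℕ → ℚ) (h k : ℕ) :
    PowerSeries.coeff (R := ℚ) h ((1 + Wps u) ^ k)
      = ∑ m ∈ Finset.range (h + 1), (k.choose m : ℚ) * PowerSeries.coeff (R := ℚ) h ((Wps u) ^ m) := by
  rw [add_comm 1 (Wps u), add_pow]
  simp only [one_pow, mul_one, map_sum]
  have key : ∀ m, PowerSeries.coeff (R := ℚ) h ((Wps u) ^ m * (k.choose m : PowerSeries ℚ))
      = (k.choose m : ℚ) * PowerSeries.coeff (R := ℚ) h ((Wps u) ^ m) := by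
    intro m
    rw [← map_natCast (PowerSeries.C (R := ℚ)) (k.choose m), PowerSeries.coeff_mul_C, mul_comm]
  simp only [key]
  set f : ℕ → ℚ := fun m => (k.choose m : ℚ) * PowerSeries.coeff (R := ℚ) h ((Wps u) ^ m) with hf
  have h1 : ∑ m ∈ Finset.range (k + 1), f m = ∑ m ∈ Finset.range (k + h + 1), f m := by
    apply Finset.sum_subset
    · exact Finset.range_subset_range.mpr (by omega)
    · intro m _ hm
      have : k < m := by simpa [Nat.lt_succ_iff] using hm
      simp [hf, Nat.choose_eq_zero_of_lt this]
  have h2 : ∑ m ∈ Finset.range (h + 1), f m = ∑ m ∈ Finset.range (k + h + 1), f m := by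
    apply Finset.sum_subset
    · exact Finset.range_subset_range.mpr (by omega)
    · intro m _ hm
      have : h < m := by simpa [Nat.lt_succ_iff] using hm
      simp [hf, coeff_W_pow_zero u this]
  rw [h1, ← h2]
theorem atilde_eq (u : ℕ → ℚ) (hu0 : u 0 = 0) (hu1 : u 1 = 1) {h j : ℕ} (hhj : h ≤ j) :
    atilde u h j = (j.descFactorial h : ℚ) *
      ∑ m ∈ Finset.range (h + 1), ((j - h).choose m : ℚ) * PowerSeries.coeff (R := ℚ) h ((Wps u) ^ m) := by
  have hco : PowerSeries.coeff (R := ℚ) j ((PowerSeries.mk u) ^ (j - h))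
      = PowerSeries.coeff (R := ℚ) h ((1 + Wps u) ^ (j - h)) := by
    rw [mk_u_eq u hu0 hu1, mul_pow, PowerSeries.coeff_X_pow_mul', if_pos (Nat.sub_le j h)]
    have hidx : j - (j - h) = h := by omega
    rw [hidx]
  have hdF : ((j - h).factorial : ℚ) * (j.descFactorial h : ℚ) = (j.factorial : ℚ) := by
    rw [← Nat.cast_mul, Nat.factorial_mul_descFactorial hhj]
  have hfac : ((j - h).factorial : ℚ) ≠ 0 := Nat.cast_ne_zero.mpr (Nat.factorial_ne_zero _)
  rw [atilde, if_pos hhj, Mj_coeff, if_pos (Nat.sub_le j h), hco, coeff_one_add_W_pow]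
  field_simp [← hdF]
  rw [← hdF]
  ring
theorem exists_polynomial_atilde' (u : ℕ → ℚ) (hu0 : u 0 = 0) (hu1 : u 1 = 1) (h : ℕ) :
    ∃ p : Polynomial ℚ, p.degree ≤ (2 * h : ℕ) ∧
      ∀ j : ℕ, p.eval (j : ℚ) = atilde u h j := by
  set c : ℕ → ℚ := fun m => PowerSeries.coeff (R := ℚ) h ((Wps u) ^ m) with hc
  set q : Polynomial ℚ := ∑ m ∈ Finset.range (h + 1),
      Polynomial.C ((m.factorial : ℚ)⁻¹ * c m) *
        (descPochhammer ℚ m).comp (Polynomial.X - Polynomial.C (h : ℚ)) with hq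
  refine ⟨descPochhammer ℚ h * q, ?_, ?_⟩
  · have hqd : q.natDegree ≤ h := by
      apply Polynomial.natDegree_sum_le_of_forall_le
      intro m hm
      refine le_trans (Polynomial.natDegree_C_mul_le _ _) ?_
      refine le_trans (Polynomial.natDegree_comp_le) ?_
      rw [descPochhammer_natDegree, Polynomial.natDegree_X_sub_C, mul_one]
      exact Nat.lt_succ_iff.mp (Finset.mem_range.mp hm)
    have hnd : (descPochhammer ℚ h * q).natDegree ≤ 2 * h := by
      refine le_trans (Polynomial.natDegree_mul_le) ?_
      rw [descPochhammer_natDegree]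
      omega
    exact le_trans (Polynomial.degree_le_natDegree) (by exact_mod_cast hnd)
  · intro j
    rw [Polynomial.eval_mul, descPochhammer_eval_eq_descFactorial]
    by_cases hhj : h ≤ j
    · rw [atilde_eq u hu0 hu1 hhj]
      congr 1
      rw [hq, Polynomial.eval_finset_sum]
      apply Finset.sum_congr rfl
      intro m _
      rw [Polynomial.eval_mul, Polynomial.eval_C, Polynomial.eval_comp,
        Polynomial.eval_sub, Polynomial.eval_X, Polynomial.eval_C,
        ← Nat.cast_sub hhj, descPochhammer_eval_eq_descFactorial,
        Nat.descFactorial_eq_factorial_mul_choose, Nat.cast_mul]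
      have : (m.factorial : ℚ) ≠ 0 := Nat.cast_ne_zero.mpr (Nat.factorial_ne_zero _)
      field_simp
      ring
    · rw [atilde, if_neg hhj, Nat.descFactorial_eq_zero_iff_lt.mpr (by omega)]
      simp
/-- For arbitrary `u` with `u 0 = 0` and `u 1 = 1`, for every `h` there is a polynomial
of degree at most `2h` representing `j ↦ ã_h(j)` on the naturals. -/
theorem exists_polynomial_atilde (u : ℕ → ℚ) (hu0 : u 0 = 0) (hu1 : u 1 = 1) (h : ℕ) :
    ∃ p : Polynomial ℚ, p.degree ≤ (2 * h : ℕ) ∧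
      ∀ j : ℕ, p.eval (j : ℚ) = atilde u h j := by
  exact exists_polynomial_atilde' u hu0 hu1 h
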